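/- If an NFA M uniquely accepts a square-free word w of length n (i.e., the only accepting path of length n spells w), then M has at least ⌊n/2⌋ + 1 states. -/

import Mathlib

/-- `IsAccPath M n v s` says that `s` is an accepting path of length `n` in the
NFA `M` (no ε-transitions) spelling the word `v`: it starts in a start state,
ends in an accepting state, and each step follows a transition labeled by the
corresponding letter of `v`. -/
def IsAccPath {α σ : Type*} (M : NFA α σ) (n : ℕ) (v : List α)
    (s : Fin (n + 1) → σ) : Prop :=
  ∃ h : v.length = n,
    s 0 ∈ M.start ∧ s (Fin.last n) ∈ M.accept ∧
    ∀ i : Fin n, s i.succ ∈ M.step (s i.castSucc) (v.get (Fin.cast h.symm i))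

/-- `UniquelyAccepts M w` says that `M` accepts `w` and there is exactly one
accepting path of length `|w|` over all words of length `|w|`; it spells `w`. -/
def UniquelyAccepts {α σ : Type*} (M : NFA α σ) (w : List α) : Prop :=
  (∃ s, IsAccPath M w.length w s) ∧
  (∀ (v : List α) (s : Fin (w.length + 1) → σ), IsAccPath M w.length v s → v = w) ∧
  (∀ s s' : Fin (w.length + 1) → σ,
    IsAccPath M w.length w s → IsAccPath M w.length w s' → s = s')

/-- The index permutation that swaps the two loops `[i,j)` and `[j,k)`. -/
def pmap (i j k t : ℕ) : ℕ :=
  if t < i then t else if t < i + (k - j) then t + (j - i) else if t < k then t - (k - j) else t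

/-- The corresponding state-index map for the swapped path. -/
def rmap (i j k t : ℕ) : ℕ :=
  if t ≤ i then t else if t ≤ i + (k - j) then t + (j - i) else if t ≤ k then t - (k - j) else t

lemma order3 {P : ℕ → Prop} {a b c : ℕ} (hab : a ≠ b) (hac : a ≠ c) (hbc : b ≠ c)
    (ha : P a) (hb : P b) (hc : P c) :
    ∃ i j k, i < j ∧ j < k ∧ P i ∧ P j ∧ P k := by
  rcases lt_or_gt_of_ne hab with h1 | h1 <;>
  rcases lt_or_gt_of_ne hac with h2 | h2 <;>
  rcases lt_or_gt_of_ne hbc with h3 | h3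
  · exact ⟨a, b, c, h1, h3, ha, hb, hc⟩
  · exact ⟨a, c, b, h2, h3, ha, hc, hb⟩
  · exact absurd rfl (by omega : a ≠ a)
  · exact ⟨c, a, b, h2, h1, hc, ha, hb⟩
  · exact ⟨b, a, c, h1, h2, hb, ha, hc⟩
  · exact absurd rfl (by omega : a ≠ a)
  · exact ⟨b, c, a, h3, h2, hb, hc, ha⟩
  · exact ⟨c, b, a, h3, h1, hc, hb, ha⟩

lemma getElem_idx_eq {α : Type*} (w : List α) (a b : ℕ) (h : a = b) (ha : a < w.length) :
    w[a] = w[b]'(h ▸ ha) := by subst h; rfl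

lemma sq_of_period {α : Type*} (w : List α) (i p : ℕ) (hp : 0 < p)
    (h2 : i + 2 * p ≤ w.length)
    (hper : ∀ u, u < p → ∀ (_ : i + u + p < w.length) (_ : i + u < w.length),
      w[i + u + p] = w[i + u]) :
    ∃ z : List α, z ≠ [] ∧ (z ++ z) <:+: w := by
  have hdl : (w.drop i).length = w.length - i := List.length_drop
  have lp : ((w.drop i).take p).length = p := by rw [List.length_take, hdl]; omega
  have l2p : ((w.drop i).take (2 * p)).length = 2 * p := by rw [List.length_take, hdl]; omega
  refine ⟨(w.drop i).take p, ?_, ?_⟩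
  · intro h
    rw [h] at lp
    simp at lp
    omega
  · have he : (w.drop i).take p ++ (w.drop i).take p = (w.drop i).take (2 * p) := by
      apply List.ext_getElem
      · rw [List.length_append, lp, l2p]; omega
      · intro t h1 h2'
        rw [l2p] at h2'
        rw [List.getElem_take, List.getElem_drop]
        rcases Nat.lt_or_ge t p with ht | ht
        · rw [List.getElem_append_left (by omega : t < ((w.drop i).take p).length)]
          rw [List.getElem_take, List.getElem_drop]
        · rw [List.getElem_append_right (by omega : ((w.drop i).take p).length ≤ t)]
          rw [List.getElem_take, List.getElem_drop]
          exact (calc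
            w[i + t]'(by omega)
              = w[i + (t - p) + p]'(by omega) := getElem_idx_eq w _ _ (by omega) (by omega)
            _ = w[i + (t - p)]'(by omega) := hper (t - p) (by omega) (by omega) (by omega)
            _ = w[i + (t - ((w.drop i).take p).length)]'(by omega) :=
                getElem_idx_eq w _ _ (by omega) (by omega)).symm
    rw [he]
    exact ((List.take_prefix _ _).isInfix).trans ((List.drop_suffix _ _).isInfix)

theorem stmt_18 {α σ : Type*} [Fintype σ] (M : NFA α σ) (w : List α)
    (hsf : ∀ u : List α, u ≠ [] → ¬ (u ++ u) <:+: w)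
    (hacc : UniquelyAccepts M w) :
    w.length / 2 + 1 ≤ Fintype.card σ := by
  classical
  by_contra hlt
  push_neg at hlt
  set n := w.length with hn
  have hcard : 2 * Fintype.card σ ≤ n := by omega
  obtain ⟨⟨s, hs⟩, huw, -⟩ := hacc
  obtain ⟨hv, h0, hlastacc, hstepF⟩ := hs
  set S : ℕ → σ := fun t => s ⟨min t n, by omega⟩ with hSdef
  have hSeq : ∀ t (h : t ≤ n), S t = s ⟨t, by omega⟩ := by
    intro t h
    simp only [hSdef]
    congr 1
    exact Fin.ext (by simp; omega)
  have h0' : S 0 ∈ M.start := by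
    rw [hSeq 0 (by omega)]
    have : (⟨0, by omega⟩ : Fin (n + 1)) = 0 := Fin.ext (by simp)
    rw [this]; exact h0
  have hlast' : S n ∈ M.accept := by
    rw [hSeq n le_rfl]
    exact hlastacc
  have hstep : ∀ t (ht : t < n), S (t + 1) ∈ M.step (S t) (w.get ⟨t, ht⟩) := by
    intro t ht
    rw [hSeq (t + 1) (by omega), hSeq t (by omega)]
    exact hstepF ⟨t, ht⟩
  -- pigeonhole: some state occurs three times among the first 2m+1 states
  obtain ⟨y, -, hy⟩ := Finset.exists_lt_card_fiber_of_mul_lt_card_of_maps_to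
    (s := (Finset.univ : Finset (Fin (2 * Fintype.card σ + 1))))
    (t := (Finset.univ : Finset σ)) (f := fun t => S t.val) (n := 2)
    (fun a _ => Finset.mem_univ _) (by simp; omega)
  set F := Finset.filter (fun x => S x.val = y)
    (Finset.univ : Finset (Fin (2 * Fintype.card σ + 1))) with hF
  obtain ⟨a, haF⟩ := Finset.card_pos.mp (show 0 < F.card by omega)
  have h1 : 1 < (F.erase a).card := by
    have := Finset.card_erase_of_mem haF
    omega
  obtain ⟨b, hbF, c, hcF, hbc⟩ := Finset.one_lt_card.mp h1
  have hba : b ≠ a := (Finset.mem_erase.mp hbF).1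
  have hca : c ≠ a := (Finset.mem_erase.mp hcF).1
  have hbF' : b ∈ F := (Finset.mem_erase.mp hbF).2
  have hcF' : c ∈ F := (Finset.mem_erase.mp hcF).2
  have hP : ∀ x : Fin (2 * Fintype.card σ + 1), x ∈ F → x.val ≤ n ∧ S x.val = y := by
    intro x hx
    exact ⟨by have := x.isLt; omega, (Finset.mem_filter.mp hx).2⟩
  obtain ⟨i, j, k, hij, hjk, ⟨hin, hSi⟩, ⟨hjn, hSj⟩, ⟨hkn, hSk⟩⟩ :=
    order3 (P := fun t => t ≤ n ∧ S t = y)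
      (fun h => hba (Fin.val_injective h).symm) (fun h => hca (Fin.val_injective h).symm)
      (fun h => hbc (Fin.val_injective h))
      (hP a haF) (hP b hbF') (hP c hcF')
  have hSij : S i = S j := by rw [hSi, hSj]
  have hSik : S i = S k := by rw [hSi, hSk]
  -- build the swapped word and path
  have hπ : ∀ t, t < n → pmap i j k t < n := by
    intro t ht
    simp only [pmap]
    split_ifs <;> omega
  set v : List α := List.ofFn (fun t : Fin n => w.get ⟨pmap i j k t.val, hπ t.val t.isLt⟩)
    with hvdef
  have hvlen : v.length = n := by simp [hvdef]
  set s' : Fin (n + 1) → σ := fun t => S (rmap i j k t.val) with hs'def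
  have key : ∀ t, t < n →
      rmap i j k (t + 1) = pmap i j k t + 1 ∧ S (rmap i j k t) = S (pmap i j k t) := by
    intro t ht
    constructor
    · simp only [rmap, pmap]; split_ifs <;> omega
    · have hcase : rmap i j k t = pmap i j k t ∨ (rmap i j k t = i ∧ pmap i j k t = j)
          ∨ (rmap i j k t = k ∧ pmap i j k t = i) ∨ (rmap i j k t = j ∧ pmap i j k t = k) := by
        simp only [rmap, pmap]; split_ifs <;> omega
      rcases hcase with h | ⟨ha1, ha2⟩ | ⟨ha1, ha2⟩ | ⟨ha1, ha2⟩
      · rw [h]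
      · rw [ha1, ha2]; exact hSij
      · rw [ha1, ha2]; exact hSik.symm
      · rw [ha1, ha2]; rw [← hSij, hSik]
  have hpath : IsAccPath M n v s' := by
    refine ⟨hvlen, ?_, ?_, ?_⟩
    · show S (rmap i j k (0 : Fin (n + 1)).val) ∈ M.start
      have hz : (0 : Fin (n + 1)).val = 0 := rfl
      rw [hz]
      have : rmap i j k 0 = 0 := by simp only [rmap]; split_ifs <;> omega
      rw [this]; exact h0'
    · show S (rmap i j k (Fin.last n).val) ∈ M.accept
      have hl : (Fin.last n).val = n := rfl
      rw [hl]
      have hr : rmap i j k n = n ∨ (rmap i j k n = j ∧ k = n) := by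
        simp only [rmap]; split_ifs <;> omega
      rcases hr with hr | ⟨hr, hkn'⟩
      · rw [hr]; exact hlast'
      · rw [hr, ← hSij, hSik, hkn']; exact hlast'
    · intro t
      have hvget : v.get (Fin.cast hvlen.symm t) =
          w.get ⟨pmap i j k t.val, hπ t.val t.isLt⟩ := by
        rw [List.get_eq_getElem]
        simp only [hvdef]
        rw [List.getElem_ofFn]
        rfl
      rw [hvget]
      show S (rmap i j k (t.val + 1)) ∈ M.step (S (rmap i j k t.val)) _
      rw [(key t.val t.isLt).1, (key t.val t.isLt).2]
      exact hstep (pmap i j k t.val) (hπ t.val t.isLt)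
  have hvw : v = w := huw v s' hpath
  have hpt : ∀ t (ht : t < n),
      w[pmap i j k t]'(by have := hπ t ht; omega) = w[t]'(by omega) := by
    intro t ht
    have e1 : v[t]'(by omega) = w[pmap i j k t]'(by have := hπ t ht; omega) := by
      simp only [hvdef]
      rw [List.getElem_ofFn]
      rfl
    rw [← e1]
    simp only [hvw]
  set p := min (j - i) (k - j) with hpdef
  have hp : 0 < p := by omega
  have h2p : i + 2 * p ≤ n := by omega
  have hper : ∀ u, u < p → ∀ (_ : i + u + p < w.length) (_ : i + u < w.length),
      w[i + u + p] = w[i + u] := by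
    intro u hu ha hb
    rcases le_or_gt (j - i) (k - j) with hc | hc
    · have hpm : pmap i j k (i + u) = i + u + p := by
        simp only [pmap]; split_ifs <;> omega
      have h0x := hpt (i + u) (by omega)
      exact (getElem_idx_eq w _ _ hpm.symm (by omega)).trans h0x
    · have hpm : pmap i j k (i + u + p) = i + u := by
        simp only [pmap]; split_ifs <;> omega
      have h0x := hpt (i + u + p) (by omega)
      exact h0x.symm.trans
        (getElem_idx_eq w _ _ hpm (by have := hπ (i + u + p) (by omega); omega))
  obtain ⟨z, hz, hinf⟩ := sq_of_period w i p hp (by omega) hper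
  exact hsf z hz hinf
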